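/- Let p be an odd prime and q an odd prime with q ≠ p. Let B be a p-form (i.e. k = 1) of rank n and let A be an isometry of B of order exactly q^r for some r ≥ 1. Then there exist natural numbers n₁, n₂ with n₁ + n₂ = n and an invertible n×n matrix U over ℤ/pℤ such that Uᵀ B U is block-diagonal diag(B_fix, B_oth) with blocks of sizes n₁ and n₂, U⁻¹ A U is the block-diagonal matrix diag(I_{n₁}, A_oth), and A_oth has no non-zero fixed points (A_oth x = x implies x = 0 for x ∈ (ℤ/pℤ)^{n₂}). -/

import Mathlib

set_option maxHeartbeats 1000000


open Matrix

theorem stmt15 (p q : ℕ) (hp : p.Prime) (hq : q.Prime) (hp2 : p ≠ 2) (hq2 : q ≠ 2)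
    (hpq : p ≠ q) (n : ℕ)
    (B : Matrix (Fin n) (Fin n) (ZMod p)) (hsymm : B.IsSymm) (hdet : IsUnit B.det)
    (A : Matrix (Fin n) (Fin n) (ZMod p)) (hiso : Aᵀ * B * A = B)
    (r : ℕ) (hr : 1 ≤ r) (hord : orderOf A = q ^ r) :
    ∃ (n₁ n₂ : ℕ) (h : n = n₁ + n₂) (U : Matrix (Fin n) (Fin n) (ZMod p)),
      IsUnit U.det ∧
      ∃ (Bfix : Matrix (Fin n₁) (Fin n₁) (ZMod p))
        (Both : Matrix (Fin n₂) (Fin n₂) (ZMod p))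
        (Aoth : Matrix (Fin n₂) (Fin n₂) (ZMod p)),
        Uᵀ * B * U = (Matrix.fromBlocks Bfix 0 0 Both).submatrix
            (fun i => finSumFinEquiv.symm (Fin.cast h i))
            (fun i => finSumFinEquiv.symm (Fin.cast h i)) ∧
        U⁻¹ * A * U = (Matrix.fromBlocks (1 : Matrix (Fin n₁) (Fin n₁) (ZMod p)) 0 0
            Aoth).submatrix
            (fun i => finSumFinEquiv.symm (Fin.cast h i))
            (fun i => finSumFinEquiv.symm (Fin.cast h i)) ∧
        ∀ x : Fin n₂ → ZMod p, Aoth.mulVec x = x → x = 0 := by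
  haveI : Fact p.Prime := ⟨hp⟩
  set m := q ^ r with hm
  have hAm : A ^ m = 1 := by rw [← hord]; exact pow_orderOf_eq_one A
  have hm0 : ((m : ℕ) : ZMod p) ≠ 0 := by
    rw [hm]
    push_cast
    apply pow_ne_zero
    intro h0
    rw [ZMod.natCast_eq_zero_iff] at h0
    exact hpq ((Nat.prime_dvd_prime_iff_eq hp hq).mp h0)
  set P : Matrix (Fin n) (Fin n) (ZMod p) :=
    ((m : ZMod p))⁻¹ • ∑ i ∈ Finset.range m, A ^ i with hP
  have hshift : ∑ i ∈ Finset.range m, A ^ (i + 1) = ∑ i ∈ Finset.range m, A ^ i := by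
    have h1 := Finset.sum_range_succ (fun i => A ^ i) m
    have h2 := Finset.sum_range_succ' (fun i => A ^ i) m
    rw [h1] at h2
    simpa [hAm] using h2.symm
  have hAP : A * P = P := by
    rw [hP, Matrix.mul_smul, Finset.mul_sum]
    congr 1
    calc ∑ i ∈ Finset.range m, A * A ^ i = ∑ i ∈ Finset.range m, A ^ (i + 1) := by
          refine Finset.sum_congr rfl fun i _ => ?_
          rw [pow_succ, ← pow_mul_comm']
      _ = _ := hshift
  have hPA : P * A = P := by
    rw [hP, Matrix.smul_mul, Finset.sum_mul]
    have e1 : ∑ i ∈ Finset.range m, A ^ i * A = ∑ i ∈ Finset.range m, A ^ i := by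
      rw [← hshift]
      exact Finset.sum_congr rfl fun i _ => (pow_succ A i).symm
    rw [e1]
  have hpowP : ∀ i : ℕ, A ^ i * P = P := by
    intro i
    induction i with
    | zero => simp
    | succ k ih => rw [pow_succ, mul_assoc, hAP, ih]
  have hPP : P * P = P := by
    conv_lhs => rw [hP, Matrix.smul_mul, Finset.sum_mul]
    conv_lhs => rw [show ∑ i ∈ Finset.range m, A ^ i * P = ∑ _i ∈ Finset.range m, P from
      Finset.sum_congr rfl fun i _ => hpowP i]
    rw [Finset.sum_const, Finset.card_range, ← Nat.cast_smul_eq_nsmul (ZMod p), smul_smul,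
      inv_mul_cancel₀ hm0, one_smul]
  have hisopow : ∀ i : ℕ, (A ^ i)ᵀ * B * (A ^ i) = B := by
    intro i
    induction i with
    | zero => simp
    | succ k ih =>
        rw [pow_succ, transpose_mul]
        calc Aᵀ * (A ^ k)ᵀ * B * (A ^ k * A) = Aᵀ * ((A ^ k)ᵀ * B * A ^ k) * A := by
              simp only [mul_assoc]
          _ = B := by rw [ih]; exact hiso
  have hBsym : Bᵀ = B := hsymm
  have key : Pᵀ * B * P = B * P := by
    conv_lhs => rw [hP, Matrix.transpose_smul, Matrix.transpose_sum, Matrix.smul_mul,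
      Matrix.smul_mul, Finset.sum_mul, Finset.sum_mul]
    have : ∀ i ∈ Finset.range m, (A ^ i)ᵀ * B * P = B * P := by
      intro i _
      calc (A ^ i)ᵀ * B * P = (A ^ i)ᵀ * B * (A ^ i * P) := by rw [hpowP]
        _ = ((A ^ i)ᵀ * B * A ^ i) * P := by simp only [mul_assoc]
        _ = B * P := by rw [hisopow]
    rw [Finset.sum_congr rfl this, Finset.sum_const, Finset.card_range,
      ← Nat.cast_smul_eq_nsmul (ZMod p), smul_smul, inv_mul_cancel₀ hm0, one_smul]
  have key2 : Pᵀ * B = B * P := by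
    have h3 := congrArg Matrix.transpose key
    simp only [Matrix.transpose_mul, Matrix.transpose_transpose, hBsym] at h3
    rw [← mul_assoc] at h3
    exact h3.symm.trans key
  have hPfix : ∀ v : Fin n → ZMod p, A.mulVec v = v → P.mulVec v = v := by
    intro v hv
    have hpowv : ∀ i : ℕ, (A ^ i).mulVec v = v := by
      intro i
      induction i with
      | zero => simp
      | succ k ih => rw [pow_succ, ← Matrix.mulVec_mulVec, hv, ih]
    have hsum : (∑ i ∈ Finset.range m, A ^ i).mulVec v
        = ∑ i ∈ Finset.range m, (A ^ i).mulVec v := by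
      funext j
      simp only [Matrix.mulVec, dotProduct, Matrix.sum_apply, Finset.sum_apply,
        Finset.sum_mul]
      exact Finset.sum_comm
    rw [hP, Matrix.smul_mulVec, hsum, Finset.sum_congr rfl fun i _ => hpowv i,
      Finset.sum_const, Finset.card_range, ← Nat.cast_smul_eq_nsmul (ZMod p), smul_smul,
      inv_mul_cancel₀ hm0, one_smul]
  classical
  let π : (Fin n → ZMod p) →ₗ[ZMod p] (Fin n → ZMod p) := P.mulVecLin
  set I : Submodule (ZMod p) (Fin n → ZMod p) := LinearMap.range π with hI
  set K : Submodule (ZMod p) (Fin n → ZMod p) := LinearMap.ker π with hK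
  have hpidem : ∀ v, π (π v) = π v := by
    intro v
    show P.mulVec (P.mulVec v) = P.mulVec v
    rw [Matrix.mulVec_mulVec, hPP]
  have hproj : LinearMap.IsProj I π :=
    ⟨fun x => LinearMap.mem_range_self π x,
     fun x hx => by obtain ⟨y, rfl⟩ := hx; exact hpidem y⟩
  have hcompl : IsCompl I K := hproj.isCompl
  have hfixI : ∀ v ∈ I, P.mulVec v = v := fun v hv => hproj.map_id v hv
  have hfixA : ∀ v ∈ I, A.mulVec v = v := by
    intro v hv
    conv_lhs => rw [← hfixI v hv]
    rw [Matrix.mulVec_mulVec, hAP, hfixI v hv]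
  have hKA : ∀ v ∈ K, A.mulVec v ∈ K := by
    intro v hv
    have : P.mulVec v = 0 := hv
    show P.mulVec (A.mulVec v) = 0
    rw [Matrix.mulVec_mulVec, hPA, this]
  -- dimensions
  set n₁ := Module.finrank (ZMod p) I with hn₁
  set n₂ := Module.finrank (ZMod p) K with hn₂
  have h : n = n₁ + n₂ := by
    rw [hn₁, hn₂, Submodule.finrank_add_eq_of_isCompl hcompl]
    simp [Module.finrank_fin_fun]
  -- bases
  let bI : Module.Basis (Fin n₁) (ZMod p) I := Module.finBasis (ZMod p) I
  let bK : Module.Basis (Fin n₂) (ZMod p) K := Module.finBasis (ZMod p) K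
  let b : Module.Basis (Fin n₁ ⊕ Fin n₂) (ZMod p) (Fin n → ZMod p) :=
    (bI.prod bK).map (Submodule.prodEquivOfIsCompl I K hcompl)
  have hbl : ∀ i, b (Sum.inl i) = (bI i : Fin n → ZMod p) := by
    intro i
    simp [b, Module.Basis.map_apply, Module.Basis.prod_apply, Submodule.coe_prodEquivOfIsCompl']
  have hbr : ∀ j, b (Sum.inr j) = (bK j : Fin n → ZMod p) := by
    intro j
    simp [b, Module.Basis.map_apply, Module.Basis.prod_apply, Submodule.coe_prodEquivOfIsCompl']
  let σ : Fin n ≃ (Fin n₁ ⊕ Fin n₂) := (finCongr h).trans finSumFinEquiv.symm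
  have hσ : ∀ i : Fin n, σ i = finSumFinEquiv.symm (Fin.cast h i) := fun i => rfl
  let c : Module.Basis (Fin n) (ZMod p) (Fin n → ZMod p) := b.reindex σ.symm
  have hc : ∀ i, c i = b (σ i) := by intro i; simp [c, Module.Basis.reindex_apply]
  let e : Module.Basis (Fin n) (ZMod p) (Fin n → ZMod p) := Pi.basisFun (ZMod p) (Fin n)
  let U : Matrix (Fin n) (Fin n) (ZMod p) := e.toMatrix c
  have hUe : ∀ i j, U i j = c j i := by
    intro i j
    simp [U, Module.Basis.toMatrix_apply, e, Pi.basisFun_repr]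
  have hUdet : IsUnit U.det := by
    have h1 : U * c.toMatrix e = 1 := Module.Basis.toMatrix_mul_toMatrix_flip e c
    exact IsUnit.of_mul_eq_one _ (by rw [← Matrix.det_mul, h1, Matrix.det_one])
  -- orthogonality
  have horth : ∀ u w : Fin n → ZMod p, P.mulVec u = u → P.mulVec w = 0 → u ⬝ᵥ B.mulVec w = 0 := by
    intro u w hu hw
    calc u ⬝ᵥ B.mulVec w = (P.mulVec u) ⬝ᵥ B.mulVec w := by rw [hu]
      _ = (Matrix.vecMul u Pᵀ) ⬝ᵥ B.mulVec w := by rw [Matrix.vecMul_transpose]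
      _ = u ⬝ᵥ (Pᵀ.mulVec (B.mulVec w)) := by rw [← Matrix.dotProduct_mulVec, Matrix.mulVec_mulVec]
      _ = u ⬝ᵥ ((Pᵀ * B).mulVec w) := by rw [Matrix.mulVec_mulVec]
      _ = u ⬝ᵥ (B.mulVec (P.mulVec w)) := by rw [key2, ← Matrix.mulVec_mulVec]
      _ = 0 := by rw [hw, Matrix.mulVec_zero, dotProduct_zero]
  have horth' : ∀ u w : Fin n → ZMod p, P.mulVec u = u → P.mulVec w = 0 → w ⬝ᵥ B.mulVec u = 0 := by
    intro u w hu hw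
    have flip : w ⬝ᵥ B.mulVec u = u ⬝ᵥ B.mulVec w := by
      rw [Matrix.dotProduct_mulVec, ← Matrix.mulVec_transpose, hBsym, dotProduct_comm]
    rw [flip]
    exact horth u w hu hw
  -- block matrices
  let Bfix : Matrix (Fin n₁) (Fin n₁) (ZMod p) := fun i j => (bI i : Fin n → ZMod p) ⬝ᵥ B.mulVec (bI j : Fin n → ZMod p)
  let Both : Matrix (Fin n₂) (Fin n₂) (ZMod p) := fun i j => (bK i : Fin n → ZMod p) ⬝ᵥ B.mulVec (bK j : Fin n → ZMod p)
  let Aoth : Matrix (Fin n₂) (Fin n₂) (ZMod p) :=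
    fun i j => bK.repr ⟨A.mulVec (bK j : Fin n → ZMod p), hKA _ (bK j).2⟩ i
  have hAoth : ∀ j, A.mulVec (bK j : Fin n → ZMod p) = ∑ i, Aoth i j • (bK i : Fin n → ZMod p) := by
    intro j
    have h1 := bK.sum_repr ⟨A.mulVec (bK j : Fin n → ZMod p), hKA _ (bK j).2⟩
    have h2 := congrArg (Submodule.subtype K) h1
    simp only [map_sum, _root_.map_smul, Submodule.coe_subtype] at h2
    exact h2.symm
  refine ⟨n₁, n₂, h, U, hUdet, Bfix, Both, Aoth, ?_, ?_, ?_⟩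
  · -- Gram matrix block form
    ext i j
    have hL : (Uᵀ * B * U) i j = (c i) ⬝ᵥ B.mulVec (c j) := by
      rw [Matrix.mul_assoc]
      simp only [Matrix.mul_apply, Matrix.transpose_apply, dotProduct, Matrix.mulVec,
        hUe]
    rw [hL, Matrix.submatrix_apply, ← hσ, ← hσ, hc, hc]
    rcases h1 : σ i with i1 | i2 <;> rcases h2 : σ j with j1 | j2
    · rw [hbl, hbl]; rfl
    · rw [hbl, hbr, Matrix.fromBlocks_apply₁₂]
      exact horth _ _ (hfixI _ (bI i1).2) ((bK j2).2)
    · rw [hbr, hbl, Matrix.fromBlocks_apply₂₁]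
      exact horth' _ _ (hfixI _ (bI j1).2) ((bK i2).2)
    · rw [hbr, hbr]; rfl
  · -- conjugated A
    let D : Matrix (Fin n) (Fin n) (ZMod p) :=
      (Matrix.fromBlocks (1 : Matrix (Fin n₁) (Fin n₁) (ZMod p)) 0 0 Aoth).submatrix
        (fun i => finSumFinEquiv.symm (Fin.cast h i)) (fun i => finSumFinEquiv.symm (Fin.cast h i))
    show U⁻¹ * A * U = D
    have hDa : ∀ i j, D i j =
        (Matrix.fromBlocks (1 : Matrix (Fin n₁) (Fin n₁) (ZMod p)) 0 0 Aoth) (σ i) (σ j) := by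
      intro i j
      show (Matrix.fromBlocks _ _ _ _).submatrix _ _ i j = _
      rw [Matrix.submatrix_apply, ← hσ, ← hσ]
    have hAU : A * U = U * D := by
      ext i j
      have hL : (A * U) i j = (A.mulVec (c j)) i := by
        simp only [Matrix.mul_apply, Matrix.mulVec, dotProduct, hUe]
      have hR : (U * D) i j = ∑ s : Fin n₁ ⊕ Fin n₂,
          b s i * (Matrix.fromBlocks (1 : Matrix (Fin n₁) (Fin n₁) (ZMod p)) 0 0 Aoth)
            s (σ j) := by
        rw [Matrix.mul_apply]
        calc ∑ k, U i k * D k j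
            = ∑ k, (fun s => b s i *
              (Matrix.fromBlocks (1 : Matrix (Fin n₁) (Fin n₁) (ZMod p)) 0 0 Aoth) s (σ j))
              (σ k) := by
              refine Finset.sum_congr rfl fun k _ => ?_
              rw [hUe, hDa, hc]
          _ = _ := Fintype.sum_equiv σ _ _ (fun k => rfl)
      rw [hL, hR, Fintype.sum_sum_type]
      rcases h2 : σ j with j1 | j2
      · simp only [Matrix.fromBlocks_apply₁₁, Matrix.fromBlocks_apply₂₁, Matrix.one_apply,
          Matrix.zero_apply, mul_ite, mul_one, mul_zero, Finset.sum_ite_eq', Finset.mem_univ,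
          if_true, Finset.sum_const_zero, add_zero]
        rw [hc, h2, hfixA _ (by rw [hbl]; exact (bI j1).2)]
      · simp only [Matrix.fromBlocks_apply₁₂, Matrix.fromBlocks_apply₂₂, Matrix.zero_apply,
          mul_zero, Finset.sum_const_zero, zero_add]
        rw [hc, h2, hbr, hAoth j2]
        simp only [Finset.sum_apply, Pi.smul_apply, smul_eq_mul]
        refine Finset.sum_congr rfl fun k _ => ?_
        rw [hbr, mul_comm]
    rw [Matrix.mul_assoc, hAU, ← Matrix.mul_assoc, Matrix.nonsing_inv_mul U hUdet,
      Matrix.one_mul]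
  · -- no fixed points
    intro x hx
    let v : K := ∑ j, x j • bK j
    have hvV : (v : Fin n → ZMod p) = ∑ j, x j • (bK j : Fin n → ZMod p) := by simp [v]
    have hAv : A.mulVec (v : Fin n → ZMod p) = (v : Fin n → ZMod p) := by
      rw [hvV]
      have h1 : A.mulVec (∑ j, x j • (bK j : Fin n → ZMod p)) = ∑ j, x j • A.mulVec (bK j : Fin n → ZMod p) := by
        rw [show A.mulVec (∑ j, x j • (bK j : Fin n → ZMod p)) = A.mulVecLin (∑ j, x j • (bK j : Fin n → ZMod p)) from rfl,
          map_sum]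
        simp [Matrix.mulVecLin_apply]
      rw [h1]
      have h2 : ∀ j, x j • A.mulVec (bK j : Fin n → ZMod p) = ∑ i, (Aoth i j * x j) • (bK i : Fin n → ZMod p) := by
        intro j
        rw [hAoth j, Finset.smul_sum]
        exact Finset.sum_congr rfl fun i _ => by rw [smul_smul, mul_comm]
      rw [Finset.sum_congr rfl fun j _ => h2 j, Finset.sum_comm]
      refine Finset.sum_congr rfl fun i _ => ?_
      rw [← Finset.sum_smul]
      congr 1
      have : ∑ j, Aoth i j * x j = Aoth.mulVec x i := rfl
      rw [this, hx]
    have hPv : P.mulVec (v : Fin n → ZMod p) = (v : Fin n → ZMod p) := hPfix _ hAv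
    have hv0 : (v : Fin n → ZMod p) = 0 := by
      have : P.mulVec (v : Fin n → ZMod p) = 0 := v.2
      rw [hPv] at this
      exact this
    have hv0' : v = 0 := Subtype.ext hv0
    have hxz := (Fintype.linearIndependent_iff.mp bK.linearIndependent) x (by rw [← hv0'])
    funext j
    exact hxz j
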